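/- Let n, a, k, r, t be integers with k, r ≥ 2, C(t-1,r-1) ≤ k < C(t,r-1), and n ≥ a ≥ t. Then C(n,r) ≥ (n-a)·k + C(a,r) - ((t-1)·k - C(t,r))·⌊(n-a)/t⌋. -/

import Mathlib

theorem stmt_6 (n a k r t : ℕ) (hk : 2 ≤ k) (hr : 2 ≤ r)
    (ht1 : (t - 1).choose (r - 1) ≤ k) (ht2 : k < t.choose (r - 1))
    (hna : a ≤ n) (hat : t ≤ a) :
    ((n : ℤ) - a) * k + (a.choose r : ℤ)
        - (((t : ℤ) - 1) * k - (t.choose r : ℤ)) * (((n - a) / t : ℕ) : ℤ)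
      ≤ (n.choose r : ℤ) := by
  -- t ≥ r
  have htr : r ≤ t := by
    by_contra h
    push_neg at h
    have : t.choose (r-1) ≤ (r-1).choose (r-1) := Nat.choose_le_choose _ (by omega)
    simp [Nat.choose_self] at this
    omega
  have hr1 : r - 1 + 1 = r := by omega
  have ht0 : 2 ≤ t := le_trans hr htr
  -- each increment is at least k+1
  have hstep : ∀ m, t ≤ m → k + 1 ≤ m.choose (r-1) :=
    fun m hm => le_trans ht2 (Nat.choose_le_choose _ hm)
  -- key sum bound
  have key : ∀ d, a.choose r + d * (k+1) ≤ (a+d).choose r := by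
    intro d
    induction d with
    | zero => simp
    | succ d ih =>
      have h1 : (a+d+1).choose r = (a+d).choose (r-1) + (a+d).choose r := by
        conv_lhs => rw [← hr1, Nat.choose_succ_succ, Nat.succ_eq_add_one, hr1]
      have h2 := hstep (a+d) (by omega)
      calc a.choose r + (d+1) * (k+1) = (a.choose r + d * (k+1)) + (k+1) := by ring
        _ ≤ (a+d).choose r + (a+d).choose (r-1) := by omega
        _ = (a+d+1).choose r := by omega
  have keyn := key (n - a)
  rw [Nat.add_sub_cancel' hna] at keyn
  -- bound on t.choose r
  have hid : t * ((t-1).choose (r-1)) = t.choose r * r := by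
    have := Nat.add_one_mul_choose_eq (t-1) (r-1)
    have e1 : t - 1 + 1 = t := by omega
    rw [e1, hr1] at this
    exact this
  have hE : t.choose r ≤ (t-1)*k + t := by
    have h3 : t.choose r * r ≤ t * k := hid ▸ Nat.mul_le_mul_left t ht1
    have h4 : 2 * t.choose r ≤ t * k := by
      calc 2 * t.choose r = t.choose r * 2 := by ring
        _ ≤ t.choose r * r := Nat.mul_le_mul_left _ hr
        _ ≤ t * k := h3
    have h6 : t * k ≤ (t-1)*k*2 := by
      calc t * k ≤ (t-1)*2*k := Nat.mul_le_mul_right k (by omega)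
        _ = (t-1)*k*2 := by ring
    linarith
  set q := (n - a) / t with hqdef
  have hq : t * q ≤ n - a := by
    rw [hqdef]; exact Nat.mul_div_le _ _
  -- move to ℤ
  have hq' : (t:ℤ) * q ≤ (n:ℤ) - a := by
    have := hq
    zify at this ⊢
    omega
  have hq0 : (0:ℤ) ≤ q := Int.natCast_nonneg q
  have hE' : (t.choose r : ℤ) ≤ ((t:ℤ)-1)*k + t := by
    have := hE
    zify [show 1 ≤ t by omega] at this
    linarith
  have keyn' : (a.choose r : ℤ) + ((n:ℤ) - a) * (k+1) ≤ (n.choose r : ℤ) := by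
    have := keyn
    zify [hna] at this
    linarith
  nlinarith [mul_le_mul_of_nonneg_right hE' hq0]
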